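/- On the middle-third Cantor set CS with Cantor function c, the pairs (x, c), (x², c) and (x³, c) are integrable, and φ(x, c) = 1, φ(x², c) = 3/4, φ(x³, c) = 5/8; that is, lim_{n→∞} 2^{−n} ∑_{𝐬∈{0,1}^n} (a_𝐬 + b_𝐬) = 1, lim_{n→∞} 2^{−n} ∑_{𝐬∈{0,1}^n} (a_𝐬² + b_𝐬²) = 3/4, and lim_{n→∞} 2^{−n} ∑_{𝐬∈{0,1}^n} (a_𝐬³ + b_𝐬³) = 5/8. -/
import Mathlib


open Filter Topology

/-- `a_s = ∑_{i=1}^n 2 s_i/3^i` for a word `s ∈ {0,1}^n`. -/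
noncomputable def aPt {n : ℕ} (s : Fin n → Fin 2) : ℝ :=
  ∑ i : Fin n, 2 * ((s i : ℕ) : ℝ) / 3 ^ ((i : ℕ) + 1)

/-- `b_s = a_s + 1/3^n`. -/
noncomputable def bPt {n : ℕ} (s : Fin n → Fin 2) : ℝ := aPt s + 1 / 3 ^ n

/-- Value of the Cantor function at `a_s`. -/
noncomputable def cA {n : ℕ} (s : Fin n → Fin 2) : ℝ :=
  ∑ i : Fin n, ((s i : ℕ) : ℝ) / 2 ^ ((i : ℕ) + 1)

/-- Value of the Cantor function at `b_s`. -/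
noncomputable def cB {n : ℕ} (s : Fin n → Fin 2) : ℝ := cA s + 1 / 2 ^ n

/-- `φ_n(x^m, c) = ∑_{s ∈ {0,1}^n} (a_s^m + b_s^m)·(c(b_s) − c(a_s))`. -/
noncomputable def phiM (m n : ℕ) : ℝ :=
  ∑ s : Fin n → Fin 2, ((aPt s) ^ m + (bPt s) ^ m) * (cB s - cA s)
lemma aPt_cons {n : ℕ} (x : Fin 2) (s : Fin n → Fin 2) :
    aPt (Fin.cons x s) = 2 * ((x : ℕ) : ℝ) / 3 + aPt s / 3 := by
  unfold aPt
  rw [Fin.sum_univ_succ, Finset.sum_div]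
  congr 1
  · norm_num
  · apply Finset.sum_congr rfl
    intro i _
    simp only [Fin.cons_succ, Fin.val_succ]
    rw [pow_succ]
    ring

lemma sum_cons {n : ℕ} (g : (Fin (n+1) → Fin 2) → ℝ) :
    ∑ s, g s = ∑ s : Fin n → Fin 2, (g (Fin.cons 0 s) + g (Fin.cons 1 s)) := by
  rw [← (Fin.consEquiv (fun _ : Fin (n+1) => Fin 2)).sum_comp]
  rw [Fintype.sum_prod_type, Fin.sum_univ_two, ← Finset.sum_add_distrib]
  rfl

lemma sum_poly3 {n : ℕ} (c0 c1 c2 c3 : ℝ) (f : (Fin n → Fin 2) → ℝ) :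
    ∑ s : Fin n → Fin 2, (c0 + c1 * f s + c2 * (f s)^2 + c3 * (f s)^3)
      = 2^n * c0 + c1 * (∑ s, f s) + c2 * (∑ s, (f s)^2) + c3 * (∑ s, (f s)^3) := by
  simp only [Finset.sum_add_distrib, Finset.sum_const, ← Finset.mul_sum]
  simp [Fintype.card_fun, nsmul_eq_mul]

lemma S1 (n : ℕ) : ∑ s : Fin n → Fin 2, aPt s = 2^n * (1 - (1/3:ℝ)^n) / 2 := by
  induction n with
  | zero => simp [aPt]
  | succ n ih =>
    rw [sum_cons (fun s => aPt s)]
    have h : ∀ s : Fin n → Fin 2,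
        aPt (Fin.cons 0 s) + aPt (Fin.cons 1 s) = (2/3 : ℝ) + (2/3) * aPt s + 0 * (aPt s)^2 + 0 * (aPt s)^3 := by
      intro s; rw [aPt_cons, aPt_cons]; norm_num; ring
    rw [Finset.sum_congr rfl (fun s _ => h s), sum_poly3, ih, pow_succ, pow_succ]
    ring

lemma S2 (n : ℕ) : ∑ s : Fin n → Fin 2, (aPt s)^2
    = 2^n * (3/8 - (1/3:ℝ)^n/2 + ((1/3:ℝ)^n)^2/8) := by
  induction n with
  | zero => simp [aPt]; norm_num
  | succ n ih =>
    rw [sum_cons (fun s => (aPt s)^2)]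
    have h : ∀ s : Fin n → Fin 2,
        (aPt (Fin.cons 0 s))^2 + (aPt (Fin.cons 1 s))^2
          = (4/9 : ℝ) + (4/9) * aPt s + (2/9) * (aPt s)^2 + 0 * (aPt s)^3 := by
      intro s; rw [aPt_cons, aPt_cons]; norm_num; ring
    rw [Finset.sum_congr rfl (fun s _ => h s), sum_poly3, ih, S1, pow_succ, pow_succ]
    ring

lemma S3 (n : ℕ) : ∑ s : Fin n → Fin 2, (aPt s)^3
    = 2^n * (5 - 9*(1/3:ℝ)^n + 3*((1/3:ℝ)^n)^2 + ((1/3:ℝ)^n)^3) / 16 := by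
  induction n with
  | zero => simp [aPt]; norm_num
  | succ n ih =>
    rw [sum_cons (fun s => (aPt s)^3)]
    have h : ∀ s : Fin n → Fin 2,
        (aPt (Fin.cons 0 s))^3 + (aPt (Fin.cons 1 s))^3
          = (8/27 : ℝ) + (4/9) * aPt s + (2/9) * (aPt s)^2 + (2/27) * (aPt s)^3 := by
      intro s; rw [aPt_cons, aPt_cons]; norm_num; ring
    rw [Finset.sum_congr rfl (fun s _ => h s), sum_poly3, ih, S1, S2, pow_succ, pow_succ]
    ring

lemma bPt_eq {n : ℕ} (s : Fin n → Fin 2) : bPt s = aPt s + (1/3:ℝ)^n := by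
  rw [bPt, one_div, one_div, inv_pow]

lemma half_pow_mul (n : ℕ) : (1/2:ℝ)^n * 2^n = 1 := by
  rw [← mul_pow]; norm_num

lemma key1 (n : ℕ) : (1/2:ℝ)^n * ∑ s : Fin n → Fin 2, (aPt s + bPt s) = 1 := by
  have h : ∀ s : Fin n → Fin 2, aPt s + bPt s
      = (1/3:ℝ)^n + 2 * aPt s + 0 * (aPt s)^2 + 0 * (aPt s)^3 := by
    intro s; rw [bPt_eq]; ring
  rw [Finset.sum_congr rfl (fun s _ => h s), sum_poly3, S1]
  have := half_pow_mul n
  nlinarith [this]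

lemma key2 (n : ℕ) : (1/2:ℝ)^n * ∑ s : Fin n → Fin 2, ((aPt s)^2 + (bPt s)^2)
    = 3/4 + ((1/3:ℝ)^n)^2/4 := by
  have h : ∀ s : Fin n → Fin 2, (aPt s)^2 + (bPt s)^2
      = ((1/3:ℝ)^n)^2 + (2*(1/3:ℝ)^n) * aPt s + 2 * (aPt s)^2 + 0 * (aPt s)^3 := by
    intro s; rw [bPt_eq]; ring
  rw [Finset.sum_congr rfl (fun s _ => h s), sum_poly3, S1, S2]
  have := half_pow_mul n
  nlinarith [this]

lemma key3 (n : ℕ) : (1/2:ℝ)^n * ∑ s : Fin n → Fin 2, ((aPt s)^3 + (bPt s)^3)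
    = 5/8 + 3*((1/3:ℝ)^n)^2/8 := by
  have h : ∀ s : Fin n → Fin 2, (aPt s)^3 + (bPt s)^3
      = ((1/3:ℝ)^n)^3 + (3*((1/3:ℝ)^n)^2) * aPt s + (3*(1/3:ℝ)^n) * (aPt s)^2 + 2 * (aPt s)^3 := by
    intro s; rw [bPt_eq]; ring
  rw [Finset.sum_congr rfl (fun s _ => h s), sum_poly3, S1, S2, S3]
  have := half_pow_mul n
  nlinarith [this]

lemma phiM_eq (m n : ℕ) : phiM m n = (1/2:ℝ)^n * ∑ s : Fin n → Fin 2, ((aPt s)^m + (bPt s)^m) := by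
  unfold phiM cB
  simp only [add_sub_cancel_left]
  rw [← Finset.sum_mul, mul_comm]
  congr 1
  rw [div_pow, one_pow]

/-- On the middle-third Cantor set, `(x,c)`, `(x²,c)`, `(x³,c)` are integrable with
`φ(x,c) = 1`, `φ(x²,c) = 3/4`, `φ(x³,c) = 5/8`; that is, the scaled endpoint power
sums `2^{−n} ∑_s (a_s^m + b_s^m)` converge to these values for `m = 1, 2, 3`. -/
theorem phi_x_x2_x3_cantor :
    (Tendsto (phiM 1) atTop (nhds 1) ∧
      Tendsto (fun n : ℕ => (1 / 2 : ℝ) ^ n * ∑ s : Fin n → Fin 2, (aPt s + bPt s))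
        atTop (nhds 1)) ∧
    (Tendsto (phiM 2) atTop (nhds (3 / 4)) ∧
      Tendsto (fun n : ℕ => (1 / 2 : ℝ) ^ n * ∑ s : Fin n → Fin 2, (aPt s ^ 2 + bPt s ^ 2))
        atTop (nhds (3 / 4))) ∧
    (Tendsto (phiM 3) atTop (nhds (5 / 8)) ∧
      Tendsto (fun n : ℕ => (1 / 2 : ℝ) ^ n * ∑ s : Fin n → Fin 2, (aPt s ^ 3 + bPt s ^ 3))
        atTop (nhds (5 / 8))) := by
  have hε : Tendsto (fun n : ℕ => ((1/3:ℝ)^n)) atTop (nhds 0) :=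
    tendsto_pow_atTop_nhds_zero_of_lt_one (by norm_num) (by norm_num)
  have hε2 : Tendsto (fun n : ℕ => ((1/3:ℝ)^n)^2) atTop (nhds 0) := by
    simpa using hε.pow 2
  have t2 : Tendsto (fun n : ℕ => (3/4 : ℝ) + ((1/3:ℝ)^n)^2/4) atTop (nhds (3/4)) := by
    simpa using (tendsto_const_nhds (x := (3/4:ℝ)) (f := atTop)).add (hε2.div_const 4)
  have t3 : Tendsto (fun n : ℕ => (5/8 : ℝ) + 3*((1/3:ℝ)^n)^2/8) atTop (nhds (5/8)) := by
    simpa using (tendsto_const_nhds (x := (5/8:ℝ)) (f := atTop)).add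
      (((hε2.const_mul 3)).div_const 8)
  have t2b := t2.congr (fun n => (key2 n).symm)
  have t3b := t3.congr (fun n => (key3 n).symm)
  have t1b : Tendsto (fun n : ℕ => (1 / 2 : ℝ) ^ n * ∑ s : Fin n → Fin 2, (aPt s + bPt s))
      atTop (nhds 1) := tendsto_const_nhds.congr (fun n => (key1 n).symm)
  refine ⟨⟨?_, t1b⟩, ⟨?_, t2b⟩, ⟨?_, t3b⟩⟩
  · refine tendsto_const_nhds.congr (fun n => ?_)
    rw [phiM_eq]
    simpa [pow_one] using (key1 n).symm
  · exact t2b.congr (fun n => (phiM_eq 2 n).symm)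
  · exact t3b.congr (fun n => (phiM_eq 3 n).symm)
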